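/- For d = 2j+1 prime and α, β ∈ {0,...,d-1}, a ≠ b modulo d, the normalized Gauss sum overlap has modulus |⟨jα;ra | jβ;rb⟩| = 1/√d; equivalently, |S(a-b, -(a-b)d - 2(α-β), d)| = √d for the generalized quadratic Gauss sum S. -/

import Mathlib

open Complex Finset

/-- The phase function `ρ(j,m,x,y,z) = (j+m)(j-m+1)x/2 - jmy + (j+m)z`. -/
noncomputable def rho (j m x y z : ℝ) : ℝ :=
  (j + m) * (j - m + 1) * x / 2 - j * m * y + (j + m) * z

/-- The vector `|jα;ra⟩` of components `(1/√d) q^{ρ(j, k-j, a, r, α)}`, `k = 0,…,d-1`,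
where `j = (d-1)/2` and `q^x = exp(2πix/d)`. -/
noncomputable def mubVec (d : ℕ) (a r α : ℝ) : Fin d → ℂ := fun k =>
  ((1 / Real.sqrt d : ℝ) : ℂ) *
    Complex.exp (2 * (Real.pi : ℂ) * Complex.I *
      ((rho (((d : ℝ) - 1) / 2) ((k : ℝ) - ((d : ℝ) - 1) / 2) a r α : ℝ) / (d : ℂ)))

/-- The overlap `⟨jα;ra | jβ;sb⟩` (standard Hermitian inner product on `ℂ^d`). -/
noncomputable def overlap (d : ℕ) (a r : ℝ) (α : ℝ) (b s : ℝ) (β : ℝ) : ℂ :=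
  ∑ k : Fin d, (starRingEnd ℂ) (mubVec d a r α k) * mubVec d b s β k

/-- Generalized quadratic Gauss sum `S(u,v,w) = ∑_{k=0}^{|w|-1} exp(iπ(uk² + vk)/w)`. -/
noncomputable def gaussS (u v w : ℤ) : ℂ :=
  ∑ k ∈ Finset.range w.natAbs,
    Complex.exp ((Real.pi : ℂ) * Complex.I *
      (((u : ℂ) * (k : ℂ) ^ 2 + (v : ℂ) * (k : ℂ)) / (w : ℂ)))


noncomputable def F (d : ℕ) (n : ℤ) : ℂ := Complex.exp ((Real.pi : ℂ) * Complex.I * n / d)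

lemma F_add (d : ℕ) (m n : ℤ) : F d (m + n) = F d m * F d n := by
  rw [F, F, F, ← Complex.exp_add]; congr 1; push_cast; ring

lemma F_two_d (d : ℕ) (hd : d ≠ 0) (n : ℤ) : F d (2 * d * n) = 1 := by
  rw [F]
  have h : (Real.pi : ℂ) * Complex.I * ((2 * d * n : ℤ) : ℂ) / d
      = n * (2 * Real.pi * Complex.I) := by
    have hd' : (d : ℂ) ≠ 0 := Nat.cast_ne_zero.mpr hd
    push_cast; field_simp
  rw [h, Complex.exp_int_mul_two_pi_mul_I]

lemma F_conj (d : ℕ) (n : ℤ) : (starRingEnd ℂ) (F d n) = F d (-n) := by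
  rw [F, F, ← Complex.exp_conj]
  congr 1
  simp only [map_div₀, map_mul, Complex.conj_I, Complex.conj_ofReal, map_intCast, map_natCast]
  push_cast; ring

lemma F_pow (d : ℕ) (n : ℤ) (k : ℕ) : F d (n * k) = F d n ^ k := by
  rw [F, F, ← Complex.exp_nat_mul]; congr 1; push_cast; ring

lemma F_zero (d : ℕ) : F d 0 = 1 := by simp [F]

/-- quadratic phase -/
noncomputable def fQ (d : ℕ) (u v n : ℤ) : ℂ := F d (u * n ^ 2 + v * n)

lemma fQ_shift (d : ℕ) (hd : d ≠ 0) (u v : ℤ) (hev : Even (u * d + v)) (n t : ℤ) :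
    fQ d u v (n + d * t) = fQ d u v n := by
  obtain ⟨e, he⟩ := hev
  obtain ⟨c, hc⟩ : Even (t - t ^ 2) := by
    have := Int.even_mul_succ_self (t - 1)
    have h := this.neg; rw [show -((t - 1) * (t - 1 + 1)) = t - t ^ 2 by ring] at h; exact h
  have harg : u * (n + d * t) ^ 2 + v * (n + d * t)
      = (u * n ^ 2 + v * n) + 2 * d * (u * n * t + e * t ^ 2 + v * c) := by
    have h1 : u * d + v = 2 * e := by linarith
    have h2 : t - t ^ 2 = 2 * c := by linarith
    linear_combination ((d : ℤ) * t ^ 2) * h1 + ((d : ℤ) * v) * h2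
  rw [fQ, fQ, harg, F_add, F_two_d d hd, mul_one]

lemma fQ_mod (d : ℕ) (hd : d ≠ 0) (u v : ℤ) (hev : Even (u * d + v)) (n : ℤ) :
    fQ d u v (n % d) = fQ d u v n := by
  conv_rhs => rw [(Int.emod_add_mul_ediv n d).symm]
  exact (fQ_shift d hd u v hev (n % d) (n / d)).symm

lemma zmod_sum (d : ℕ) [NeZero d] (g : ℕ → ℂ) :
    ∑ x : ZMod d, g x.val = ∑ k ∈ range d, g k := by
  cases d with
  | zero => exact absurd rfl (NeZero.ne 0)
  | succ n => exact Fin.sum_univ_eq_sum_range (fun k => g k) (n + 1)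

lemma gauss_core (d : ℕ) (hd : d.Prime) (u v : ℤ) (hu : ¬ (d:ℤ) ∣ u)
    (hev : Even (u * d + v)) :
    ‖gaussS u v d‖ = Real.sqrt d := by
  have hd0 : d ≠ 0 := hd.ne_zero
  haveI : NeZero d := ⟨hd0⟩
  have hdC : (d : ℂ) ≠ 0 := Nat.cast_ne_zero.mpr hd0
  set S := gaussS u v d with hS
  have h1 : S = ∑ x : ZMod d, fQ d u v x.val := by
    rw [hS, gaussS, zmod_sum d (fun k => fQ d u v k)]
    apply Finset.sum_congr (by simp)
    intro x _
    rw [fQ, F]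
    congr 1
    push_cast
    ring
  have h2 : (starRingEnd ℂ) S = ∑ y : ZMod d, F d (-(u * (y.val : ℤ) ^ 2 + v * y.val)) := by
    rw [h1, map_sum]
    exact Finset.sum_congr rfl fun y _ => by rw [fQ, F_conj]
  have key : ∀ y m : ZMod d, fQ d u v ((y + m).val) * F d (-(u * (y.val:ℤ) ^ 2 + v * y.val))
      = fQ d u v m.val * F d ((2 * u * m.val) * y.val) := by
    intro y m
    have hval : ((y + m).val : ℤ) = ((y.val : ℤ) + m.val) % d := by
      rw [ZMod.val_add]
      push_cast
      ring
    rw [hval, fQ_mod d hd0 u v hev _, fQ, fQ, ← F_add, ← F_add]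
    congr 1
    ring
  have inner0 : ∀ m : ZMod d, m ≠ 0 → ∑ y : ZMod d, F d ((2 * u * m.val) * y.val) = 0 := by
    intro m hm
    have hsum : ∑ y : ZMod d, F d ((2 * u * m.val) * y.val)
        = ∑ k ∈ range d, F d (2 * u * m.val) ^ k := by
      rw [zmod_sum d (fun k => F d ((2 * u * (m.val : ℤ)) * k))]
      exact Finset.sum_congr rfl fun k _ => F_pow d _ k
    have hr1 : F d (2 * u * m.val) ≠ 1 := by
      intro h
      rw [F, Complex.exp_eq_one_iff] at h
      obtain ⟨n, hn⟩ := h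
      have hπ : (Real.pi : ℂ) ≠ 0 := by exact_mod_cast Real.pi_ne_zero
      rw [div_eq_iff hdC] at hn
      push_cast [-ZMod.natCast_val] at hn
      have h6 : (2 * (Real.pi : ℂ) * Complex.I) * ((u : ℂ) * (m.val : ℂ))
          = (2 * (Real.pi : ℂ) * Complex.I) * ((n : ℂ) * (d : ℂ)) := by
        linear_combination hn
      have h2pi : (2 * (Real.pi : ℂ) * Complex.I) ≠ 0 := by
        simp [Real.pi_ne_zero, Complex.I_ne_zero]
      have hc2 : (u : ℂ) * (m.val : ℂ) = (n : ℂ) * (d : ℂ) := mul_left_cancel₀ h2pi h6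
      have hcz : u * (m.val : ℤ) = n * d := by exact_mod_cast hc2
      have hdvd : (d : ℤ) ∣ u * m.val := ⟨n, by rw [hcz]; ring⟩
      have hdp : Prime (d : ℤ) := Nat.prime_iff_prime_int.mp hd
      rcases hdp.dvd_mul.mp hdvd with h' | h'
      · exact hu h'
      · have : (d : ℤ) ∣ (m.val : ℤ) := h'
        have hnat : d ∣ m.val := Int.ofNat_dvd.mp (by exact_mod_cast this)
        exact hm ((ZMod.val_eq_zero m).mp (Nat.eq_zero_of_dvd_of_lt hnat (ZMod.val_lt m)))
    have hrd : F d (2 * u * m.val) ^ d = 1 := by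
      rw [← F_pow, show ((2 * u * (m.val : ℤ)) * (d : ℕ) : ℤ) = 2 * d * (u * m.val) by
        push_cast; ring, F_two_d d hd0 _]
    rw [hsum, geom_sum_eq hr1, hrd]
    simp
  have h3 : S * (starRingEnd ℂ) S = (d : ℂ) := by
    rw [h2, h1, Finset.sum_mul_sum]
    rw [Finset.sum_comm]
    have : ∀ y : ZMod d,
        ∑ x : ZMod d, fQ d u v x.val * F d (-(u * (y.val:ℤ) ^ 2 + v * y.val))
        = ∑ m : ZMod d, fQ d u v m.val * F d ((2 * u * m.val) * y.val) := by
      intro y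
      rw [← Fintype.sum_equiv (Equiv.addLeft y)
        (fun m => fQ d u v ((y + m).val) * F d (-(u * (y.val:ℤ) ^ 2 + v * y.val)))
        (fun x => fQ d u v x.val * F d (-(u * (y.val:ℤ) ^ 2 + v * y.val)))
        (fun m => rfl)]
      exact Finset.sum_congr rfl fun m _ => key y m
    rw [Finset.sum_congr rfl fun y _ => this y, Finset.sum_comm]
    rw [Finset.sum_congr rfl fun m (_ : m ∈ univ) => (Finset.mul_sum _ _ _).symm]
    rw [Finset.sum_eq_single 0]
    · simp [fQ, ZMod.val_zero, F_zero, ZMod.card]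
    · intro m _ hm
      rw [inner0 m hm, mul_zero]
    · intro h
      exact absurd (Finset.mem_univ 0) h
  have h4 : Complex.normSq S = d := by
    have := Complex.mul_conj S
    have h5 : ((Complex.normSq S : ℝ) : ℂ) = ((d : ℝ) : ℂ) := by
      rw [← this, h3]; norm_num
    exact_mod_cast h5
  rw [Complex.norm_def, h4]
lemma term_eq (d : ℕ) (hd : d ≠ 0) (r : ℝ) (a b α β : ℕ) (k : Fin d) :
    (starRingEnd ℂ) (mubVec d a r α k) * mubVec d b r β k
      = (1 / (d : ℂ)) * Complex.exp ((Real.pi : ℂ) * Complex.I *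
        (((((a : ℤ) - b : ℤ) : ℂ) * ((k : ℕ) : ℂ) ^ 2 +
          ((-((a : ℤ) - b) * d - 2 * ((α : ℤ) - β) : ℤ) : ℂ) * ((k : ℕ) : ℂ)) / (d : ℂ))) := by
  have hd0 : (0 : ℝ) < d := by positivity
  have hdR : (d : ℝ) ≠ 0 := ne_of_gt hd0
  have hdC : (d : ℂ) ≠ 0 := Nat.cast_ne_zero.mpr hd
  rw [mubVec, mubVec]
  rw [map_mul, ← Complex.exp_conj]
  have hc : (starRingEnd ℂ) (((1 / Real.sqrt d : ℝ) : ℂ)) = ((1 / Real.sqrt d : ℝ) : ℂ) :=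
    Complex.conj_ofReal _
  rw [hc]
  have hsq : (((1 / Real.sqrt d : ℝ) : ℂ)) * (((1 / Real.sqrt d : ℝ) : ℂ)) = 1 / (d : ℂ) := by
    rw [← Complex.ofReal_mul, show (1 / Real.sqrt d) * (1 / Real.sqrt d) = 1 / (d : ℝ) by
      rw [div_mul_div_comm, one_mul, Real.mul_self_sqrt hd0.le],
      Complex.ofReal_div, Complex.ofReal_one, Complex.ofReal_natCast]
  have harg : (starRingEnd ℂ) (2 * (Real.pi : ℂ) * Complex.I *
        ((rho (((d : ℝ) - 1) / 2) (((k : Fin d) : ℝ) - ((d : ℝ) - 1) / 2) a r α : ℝ) / (d : ℂ)))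
      + 2 * (Real.pi : ℂ) * Complex.I *
        ((rho (((d : ℝ) - 1) / 2) (((k : Fin d) : ℝ) - ((d : ℝ) - 1) / 2) b r β : ℝ) / (d : ℂ))
      = (Real.pi : ℂ) * Complex.I *
        (((((a : ℤ) - b : ℤ) : ℂ) * ((k : ℕ) : ℂ) ^ 2 +
          ((-((a : ℤ) - b) * d - 2 * ((α : ℤ) - β) : ℤ) : ℂ) * ((k : ℕ) : ℂ)) / (d : ℂ)) := by
    simp only [map_mul, map_div₀, Complex.conj_I, Complex.conj_ofReal, map_ofNat,
      map_natCast]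
    rw [rho, rho]
    push_cast
    field_simp
    ring
  rw [mul_mul_mul_comm, hsq, ← Complex.exp_add, harg]

lemma overlap_eq (d : ℕ) (hd : d ≠ 0) (r : ℝ) (a b α β : ℕ) :
    overlap d a r α b r β
      = (1 / (d : ℂ)) * gaussS ((a : ℤ) - b) (-((a : ℤ) - b) * d - 2 * ((α : ℤ) - β)) d := by
  rw [overlap, gaussS, Finset.mul_sum]
  simp only [Int.natAbs_natCast, Int.cast_natCast]
  rw [← Fin.sum_univ_eq_sum_range (fun k : ℕ => (1 / (d : ℂ)) * Complex.exp
    ((Real.pi : ℂ) * Complex.I *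
      (((((a : ℤ) - b : ℤ) : ℂ) * (k : ℂ) ^ 2 +
        ((-((a : ℤ) - b) * d - 2 * ((α : ℤ) - β) : ℤ) : ℂ) * (k : ℂ)) / (d : ℂ)))) d]
  exact Finset.sum_congr rfl fun k _ => term_eq d hd r a b α β k

/-- for `d = 2j+1` prime and `a ≠ b (mod d)`,
`|⟨jα;ra | jβ;rb⟩| = 1/√d`; equivalently `|S(a-b, -(a-b)d - 2(α-β), d)| = √d`. -/
theorem stmt_19 (d : ℕ) (hd : d.Prime) (r : ℝ) (a b α β : ℕ)
    (ha : a < d) (hb : b < d) (hab : a ≠ b) (hα : α < d) (hβ : β < d) :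
    ‖overlap d a r α b r β‖ = 1 / Real.sqrt d ∧
    ‖gaussS ((a : ℤ) - b) (-(((a : ℤ) - b)) * d - 2 * ((α : ℤ) - β)) d‖ =
      Real.sqrt d := by
  have hd0 : d ≠ 0 := hd.ne_zero
  have hdR0 : (0:ℝ) < d := by positivity
  have hs : Real.sqrt d ≠ 0 := by positivity
  set u : ℤ := (a : ℤ) - b with hu'
  set v : ℤ := -((a : ℤ) - b) * d - 2 * ((α : ℤ) - β) with hv'
  have hu : ¬ (d : ℤ) ∣ u := by
    intro hdvd
    have h0 : u = 0 := Int.eq_zero_of_dvd_of_natAbs_lt_natAbs hdvd (by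
      simp only [Int.natAbs_natCast, hu']
      omega)
    have : a = b := by omega
    exact hab this
  have hev : Even (u * d + v) := ⟨-((α : ℤ) - β), by rw [hu', hv']; ring⟩
  have hgauss : ‖gaussS u v d‖ = Real.sqrt d := gauss_core d hd u v hu hev
  refine ⟨?_, hgauss⟩
  rw [overlap_eq d hd0 r a b α β]
  rw [norm_mul, ← hu', ← hv', hgauss]
  rw [norm_div, norm_one, Complex.norm_natCast]
  rw [div_mul_eq_mul_div, one_mul, div_eq_div_iff (by positivity) hs]
  rw [one_mul, Real.mul_self_sqrt hdR0.le]
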